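/- Let H be a 3-uniform hypergraph with no K_{2,t} trace (t ≥ 3) and let A be the set of edges of H containing a pair of co-degree exactly 1. Then |A| ≤ ex(n, K_{2,t}), the graph Turán number of K_{2,t}, which is at most (√(t−1)/2)n^{3/2} + o(n^{3/2}). -/

import Mathlib

/-- The co-degree of a pair of vertices. -/
def codeg {V : Type*} [DecidableEq V] (H : Finset (Finset V)) (x y : V) : ℕ :=
  (H.filter fun e => x ∈ e ∧ y ∈ e).card

/-- `H` contains `K_{2,t}` as a trace. -/
def HasK2tTrace (t : ℕ) {V : Type*} [DecidableEq V] (H : Finset (Finset V)) : Prop :=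
  ∃ (x y : V) (u : Fin t → V) (e f : Fin t → Finset V),
    x ≠ y ∧ Function.Injective u ∧ (∀ i, u i ≠ x ∧ u i ≠ y) ∧
    (∀ i, e i ∈ H) ∧ (∀ i, f i ∈ H) ∧
    Function.Injective e ∧ Function.Injective f ∧ (∀ i j, e i ≠ f j) ∧
    (∀ i, e i ∩ insert x (insert y (Finset.image u Finset.univ)) = {x, u i}) ∧
    (∀ i, f i ∩ insert x (insert y (Finset.image u Finset.univ)) = {y, u i})

/-- A simple graph is `K_{2,t}`-free. -/
def K2tFree (t : ℕ) {V : Type*} (G : SimpleGraph V) : Prop :=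
  ¬ ∃ (x y : V) (u : Fin t → V), x ≠ y ∧ Function.Injective u ∧
      (∀ i, u i ≠ x ∧ u i ≠ y) ∧ ∀ i, G.Adj x (u i) ∧ G.Adj y (u i)

/-- The graph Turán number of `K_{2,t}` on `n` vertices. -/
noncomputable def exK2t (n t : ℕ) : ℕ :=
  sSup {m | ∃ G : SimpleGraph (Fin n), K2tFree t G ∧ G.edgeSet.ncard = m}

lemma codeg_comm {V : Type*} [DecidableEq V] (H : Finset (Finset V)) (x y : V) :
    codeg H x y = codeg H y x := by
  unfold codeg; congr 1; ext e; simp [and_comm]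

lemma codeg_unique {V : Type*} [DecidableEq V] {H : Finset (Finset V)} {x y : V}
    (h : codeg H x y = 1) {e₁ e₂ : Finset V} (h1 : e₁ ∈ H) (hx1 : x ∈ e₁) (hy1 : y ∈ e₁)
    (h2 : e₂ ∈ H) (hx2 : x ∈ e₂) (hy2 : y ∈ e₂) : e₁ = e₂ := by
  rw [codeg, Finset.card_eq_one] at h
  obtain ⟨a, ha⟩ := h
  have m1 : e₁ ∈ H.filter fun e => x ∈ e ∧ y ∈ e := Finset.mem_filter.2 ⟨h1, hx1, hy1⟩
  have m2 : e₂ ∈ H.filter fun e => x ∈ e ∧ y ∈ e := Finset.mem_filter.2 ⟨h2, hx2, hy2⟩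
  rw [ha, Finset.mem_singleton] at m1 m2
  rw [m1, m2]

lemma ncard_mem_exK2tSet {n : ℕ} {m : ℕ}
    (hm : m ∈ {m | ∃ G : SimpleGraph (Fin n), K2tFree t G ∧ G.edgeSet.ncard = m}) :
    m ≤ Nat.card (Sym2 (Fin n)) := by
  obtain ⟨G, -, rfl⟩ := hm
  calc G.edgeSet.ncard ≤ (Set.univ : Set (Sym2 (Fin n))).ncard :=
        Set.ncard_le_ncard (Set.subset_univ _) Set.finite_univ
    _ = Nat.card (Sym2 (Fin n)) := Set.ncard_univ _

lemma part1 (t n : ℕ) (ht : 3 ≤ t) (H : Finset (Finset (Fin n)))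
    (hntr : ¬ HasK2tTrace t H) :
    (H.filter fun e => ∃ x ∈ e, ∃ y ∈ e, x ≠ y ∧ codeg H x y = 1).card ≤ exK2t n t := by
  classical
  set A := H.filter fun e => ∃ x ∈ e, ∃ y ∈ e, x ≠ y ∧ codeg H x y = 1 with hA
  have hAH : A ⊆ H := Finset.filter_subset _ _
  rcases Finset.eq_empty_or_nonempty A with hAe | hAne
  · simp [hAe]
  obtain ⟨e₀, he₀⟩ := hAne
  have hne : Nonempty (Fin n) := by
    rw [hA, Finset.mem_filter] at he₀
    obtain ⟨-, x, -, -⟩ := he₀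
    exact ⟨x⟩
  have hch : ∀ e : Finset (Fin n), ∃ pq : Fin n × Fin n,
      e ∈ A → (pq.1 ∈ e ∧ pq.2 ∈ e ∧ pq.1 ≠ pq.2 ∧ codeg H pq.1 pq.2 = 1) := by
    intro e
    by_cases he : e ∈ A
    · rw [hA, Finset.mem_filter] at he
      obtain ⟨-, x, hx, y, hy, hxy, hcd⟩ := he
      exact ⟨(x, y), fun _ => ⟨hx, hy, hxy, hcd⟩⟩
    · exact ⟨(Classical.arbitrary _, Classical.arbitrary _), fun h => absurd h he⟩
  choose p hp using hch
  have hp1 : ∀ e, e ∈ A → (p e).1 ∈ e := fun e he => (hp e he).1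
  have hp2 : ∀ e, e ∈ A → (p e).2 ∈ e := fun e he => (hp e he).2.1
  have hp3 : ∀ e, e ∈ A → (p e).1 ≠ (p e).2 := fun e he => (hp e he).2.2.1
  have hp4 : ∀ e, e ∈ A → codeg H (p e).1 (p e).2 = 1 := fun e he => (hp e he).2.2.2
  let G : SimpleGraph (Fin n) :=
    { Adj := fun a b => ∃ e ∈ A, p e = (a, b) ∨ p e = (b, a)
      symm := by
        refine ⟨?_⟩; rintro a b ⟨e, he, h | h⟩
        · exact ⟨e, he, Or.inr h⟩
        · exact ⟨e, he, Or.inl h⟩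
      loopless := by
        refine ⟨?_⟩; rintro a ⟨e, he, h | h⟩ <;>
        · apply hp3 e he
          rw [h] }
  have hGfree : K2tFree t G := by
    rintro ⟨x, y, u, hxy, huinj, hune, hadj⟩
    apply hntr
    have hche : ∀ i, ∃ ei ∈ A, p ei = (x, u i) ∨ p ei = (u i, x) := fun i => (hadj i).1
    have hchf : ∀ i, ∃ fi ∈ A, p fi = (y, u i) ∨ p fi = (u i, y) := fun i => (hadj i).2
    choose e he hpe using hche
    choose f hf hpf using hchf
    have hex : ∀ i, x ∈ e i ∧ u i ∈ e i := by
      intro i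
      rcases hpe i with h | h
      · exact ⟨by simpa [h] using hp1 _ (he i), by simpa [h] using hp2 _ (he i)⟩
      · exact ⟨by simpa [h] using hp2 _ (he i), by simpa [h] using hp1 _ (he i)⟩
    have hfy : ∀ i, y ∈ f i ∧ u i ∈ f i := by
      intro i
      rcases hpf i with h | h
      · exact ⟨by simpa [h] using hp1 _ (hf i), by simpa [h] using hp2 _ (hf i)⟩
      · exact ⟨by simpa [h] using hp2 _ (hf i), by simpa [h] using hp1 _ (hf i)⟩
    have hcde : ∀ i, codeg H x (u i) = 1 := by
      intro i
      rcases hpe i with h | h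
      · simpa [h] using hp4 _ (he i)
      · rw [codeg_comm]; simpa [h] using hp4 _ (he i)
    have hcdf : ∀ i, codeg H y (u i) = 1 := by
      intro i
      rcases hpf i with h | h
      · simpa [h] using hp4 _ (hf i)
      · rw [codeg_comm]; simpa [h] using hp4 _ (hf i)
    have heinj : Function.Injective e := by
      intro i j hij
      apply huinj
      rcases hpe i with h1 | h1 <;> rcases hpe j with h2 | h2 <;>
          rw [hij, h2, Prod.ext_iff] at h1 <;> simp only at h1
      · exact h1.2.symm
      · exact absurd h1.1 (hune j).1
      · exact absurd h1.1.symm (hune i).1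
      · exact h1.1.symm
    have hfinj : Function.Injective f := by
      intro i j hij
      apply huinj
      rcases hpf i with h1 | h1 <;> rcases hpf j with h2 | h2 <;>
          rw [hij, h2, Prod.ext_iff] at h1 <;> simp only at h1
      · exact h1.2.symm
      · exact absurd h1.1 (hune j).2
      · exact absurd h1.1.symm (hune i).2
      · exact h1.1.symm
    have hef : ∀ i j, e i ≠ f j := by
      intro i j hij
      rcases hpe i with h1 | h1 <;> rcases hpf j with h2 | h2 <;>
          rw [hij, h2, Prod.ext_iff] at h1 <;> simp only at h1
      · exact hxy h1.1.symm
      · exact (hune j).1 h1.1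
      · exact (hune i).2 h1.1.symm
      · exact hxy h1.2.symm
    have hES : ∀ i, e i ∩ insert x (insert y (Finset.image u Finset.univ)) = {x, u i} := by
      intro i
      ext z
      simp only [Finset.mem_inter, Finset.mem_insert, Finset.mem_image, Finset.mem_univ,
        true_and, Finset.mem_singleton]
      constructor
      · rintro ⟨hz, rfl | rfl | ⟨j, rfl⟩⟩
        · exact Or.inl rfl
        · exact absurd (codeg_unique (hcdf i) (hAH (he i)) hz (hex i).2
            (hAH (hf i)) (hfy i).1 (hfy i).2) (hef i i)
        · rcases eq_or_ne j i with rfl | hji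
          · exact Or.inr rfl
          · exact absurd (heinj (codeg_unique (hcde j) (hAH (he i)) (hex i).1 hz
              (hAH (he j)) (hex j).1 (hex j).2)) (Ne.symm hji)
      · rintro (h | h)
        · exact ⟨h ▸ (hex i).1, Or.inl h⟩
        · exact ⟨h ▸ (hex i).2, Or.inr (Or.inr ⟨i, h.symm⟩)⟩
    have hFS : ∀ i, f i ∩ insert x (insert y (Finset.image u Finset.univ)) = {y, u i} := by
      intro i
      ext z
      simp only [Finset.mem_inter, Finset.mem_insert, Finset.mem_image, Finset.mem_univ,
        true_and, Finset.mem_singleton]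
      constructor
      · rintro ⟨hz, rfl | rfl | ⟨j, rfl⟩⟩
        · exact absurd (codeg_unique (hcde i) (hAH (he i)) (hex i).1 (hex i).2
            (hAH (hf i)) hz (hfy i).2) (hef i i)
        · exact Or.inl rfl
        · rcases eq_or_ne j i with rfl | hji
          · exact Or.inr rfl
          · exact absurd (hfinj (codeg_unique (hcdf j) (hAH (hf i)) (hfy i).1 hz
              (hAH (hf j)) (hfy j).1 (hfy j).2)) (Ne.symm hji)
      · rintro (h | h)
        · exact ⟨h ▸ (hfy i).1, Or.inr (Or.inl h)⟩
        · exact ⟨h ▸ (hfy i).2, Or.inr (Or.inr ⟨i, h.symm⟩)⟩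
    exact ⟨x, y, u, e, f, hxy, huinj, hune, fun i => hAH (he i), fun i => hAH (hf i),
      heinj, hfinj, hef, hES, hFS⟩
  have hdec : DecidableRel G.Adj := Classical.decRel _
  have hcard : A.card ≤ G.edgeSet.ncard := by
    rw [Set.ncard_eq_toFinset_card']
    refine Finset.card_le_card_of_injOn (fun e => Sym2.mk (p e).1 (p e).2) ?_ ?_
    · intro e he
      rw [Finset.mem_coe, Set.mem_toFinset]
      exact (SimpleGraph.mem_edgeSet G).mpr ⟨e, Finset.mem_coe.mp he, Or.inl rfl⟩
    · intro e he e' he' hee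
      simp only [Sym2.mk_eq_mk_iff] at hee
      replace he := Finset.mem_coe.mp he
      replace he' := Finset.mem_coe.mp he'
      have hx : (p e).1 ∈ e' ∧ (p e).2 ∈ e' := by
        rcases hee with h | h
        · rw [h]; exact ⟨hp1 _ he', hp2 _ he'⟩
        · rw [show (p e).1 = (p e').2 from congrArg Prod.fst h,
            show (p e).2 = (p e').1 from congrArg Prod.snd h]
          exact ⟨hp2 _ he', hp1 _ he'⟩
      exact codeg_unique (hp4 _ he) (hAH he) (hp1 _ he) (hp2 _ he) (hAH he') hx.1 hx.2
  refine hcard.trans (le_csSup ?_ ⟨G, hGfree, rfl⟩)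
  exact ⟨Nat.card (Sym2 (Fin n)), fun m hm => ncard_mem_exK2tSet hm⟩

open Finset in
lemma kst (t n : ℕ) (ht : 3 ≤ t) (G : SimpleGraph (Fin n)) [DecidableRel G.Adj]
    (hG : K2tFree t G) :
    (G.edgeFinset.card : ℝ) ≤ Real.sqrt ((t : ℝ) - 1) / 2 * (n : ℝ) ^ ((3 : ℝ) / 2) + n := by
  classical
  -- codegree bound
  have hcodeg : ∀ x y : Fin n, x ≠ y →
      (Finset.univ.filter fun v => G.Adj x v ∧ G.Adj y v).card ≤ t - 1 := by
    intro x y hxy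
    by_contra hlt
    push_neg at hlt
    have hts : t ≤ (Finset.univ.filter fun v => G.Adj x v ∧ G.Adj y v).card := by omega
    obtain ⟨s, hs, hscard⟩ := Finset.exists_subset_card_eq hts
    have hcards : Fintype.card s = t := by simp [hscard]
    let eqv := Fintype.equivFinOfCardEq hcards
    refine hG ⟨x, y, fun i => ((eqv.symm i : s) : Fin n), hxy, ?_, ?_, ?_⟩
    · intro i j hij
      exact eqv.symm.injective (Subtype.ext hij)
    · intro i
      have hmem := hs (eqv.symm i).2
      rw [Finset.mem_filter] at hmem
      exact ⟨hmem.2.1.ne', hmem.2.2.ne'⟩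
    · intro i
      have hmem := hs (eqv.symm i).2
      rw [Finset.mem_filter] at hmem
      exact ⟨hmem.2.1, hmem.2.2⟩
  -- counting
  have hswap : ∑ v : Fin n, (G.degree v) ^ 2
      = ∑ x : Fin n, ∑ y : Fin n,
          (Finset.univ.filter fun v => G.Adj x v ∧ G.Adj y v).card := by
    have hdeg : ∀ v : Fin n, G.degree v = ∑ x : Fin n, if G.Adj v x then 1 else 0 := by
      intro v
      rw [SimpleGraph.degree, SimpleGraph.neighborFinset_eq_filter, Finset.card_filter]
    have hind : ∀ (a b : Prop) [Decidable a] [Decidable b],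
        ((if a then (1:ℕ) else 0) * (if b then 1 else 0)) = if a ∧ b then 1 else 0 := by
      intro a b _ _
      by_cases ha : a <;> by_cases hb : b <;> simp [ha, hb]
    calc ∑ v : Fin n, (G.degree v) ^ 2
        = ∑ v : Fin n, ∑ x : Fin n, ∑ y : Fin n,
            ((if G.Adj v x then 1 else 0) * if G.Adj v y then 1 else 0) := by
          simp_rw [hdeg, sq, Finset.sum_mul_sum]
      _ = ∑ x : Fin n, ∑ y : Fin n, ∑ v : Fin n,
            ((if G.Adj v x then 1 else 0) * if G.Adj v y then 1 else 0) := by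
          rw [Finset.sum_comm]
          congr 1
          ext x
          rw [Finset.sum_comm]
      _ = ∑ x : Fin n, ∑ y : Fin n,
            (Finset.univ.filter fun v => G.Adj x v ∧ G.Adj y v).card := by
          congr 1; ext x; congr 1; ext y
          rw [Finset.card_filter]
          congr 1; ext v
          rw [hind]
          congr 1
          rw [G.adj_comm v x, G.adj_comm v y]
  have hsum2 : ∑ v : Fin n, (G.degree v) ^ 2
      ≤ 2 * G.edgeFinset.card + (t - 1) * (n * n) := by
    rw [hswap]
    calc ∑ x : Fin n, ∑ y : Fin n,
          (Finset.univ.filter fun v => G.Adj x v ∧ G.Adj y v).card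
        ≤ ∑ x : Fin n, ∑ y : Fin n, ((if x = y then G.degree x else 0) + (t - 1)) := by
          refine Finset.sum_le_sum fun x _ => Finset.sum_le_sum fun y _ => ?_
          rcases eq_or_ne x y with rfl | hxy
          · simp only [if_pos rfl]
            have : (Finset.univ.filter fun v => G.Adj x v ∧ G.Adj x v).card
                = G.degree x := by
              rw [SimpleGraph.degree, SimpleGraph.neighborFinset_eq_filter]
              congr 1
              ext v
              simp
            rw [this]
            exact Nat.le_add_right _ _
          · rw [if_neg hxy, zero_add]
            exact hcodeg x y hxy
      _ = ∑ x : Fin n, (G.degree x + n * (t - 1)) := by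
          congr 1; ext x
          rw [Finset.sum_add_distrib, Finset.sum_ite_eq, if_pos (Finset.mem_univ x)]
          simp [mul_comm]
      _ = 2 * G.edgeFinset.card + (t - 1) * (n * n) := by
          rw [Finset.sum_add_distrib, SimpleGraph.sum_degrees_eq_twice_card_edges]
          simp [Finset.card_univ]
          ring
  -- Cauchy-Schwarz over ℝ
  have hcs : ((2 * G.edgeFinset.card : ℕ) : ℝ) ^ 2
      ≤ (n : ℝ) * ∑ v : Fin n, ((G.degree v : ℝ)) ^ 2 := by
    rw [← SimpleGraph.sum_degrees_eq_twice_card_edges]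
    push_cast
    have := sq_sum_le_card_mul_sum_sq (s := (Finset.univ : Finset (Fin n)))
      (f := fun v => (G.degree v : ℝ))
    simpa [Finset.card_univ] using this
  set a : ℝ := (G.edgeFinset.card : ℝ) with ha
  set N : ℝ := (n : ℝ) with hN
  have hNnn : 0 ≤ N := by positivity
  have hann : 0 ≤ a := by positivity
  have hT : ((t : ℝ) - 1) = ((t - 1 : ℕ) : ℝ) := by
    have : (1 : ℕ) ≤ t := by omega
    push_cast [this]
    ring
  have hTnn : 0 ≤ (t : ℝ) - 1 := by
    have : (3 : ℝ) ≤ t := by exact_mod_cast ht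
    linarith
  have hkey : (2 * a) ^ 2 ≤ N * (2 * a + ((t : ℝ) - 1) * N ^ 2) := by
    have h2 : (∑ v : Fin n, ((G.degree v : ℝ)) ^ 2)
        ≤ 2 * a + ((t : ℝ) - 1) * N ^ 2 := by
      rw [hT]
      calc (∑ v : Fin n, ((G.degree v : ℝ)) ^ 2)
          = ((∑ v : Fin n, (G.degree v) ^ 2 : ℕ) : ℝ) := by push_cast; ring
        _ ≤ ((2 * G.edgeFinset.card + (t - 1) * (n * n) : ℕ) : ℝ) := by
            exact_mod_cast hsum2
        _ = 2 * a + ((t - 1 : ℕ) : ℝ) * N ^ 2 := by push_cast; ring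
    calc (2 * a) ^ 2 = ((2 * G.edgeFinset.card : ℕ) : ℝ) ^ 2 := by push_cast; ring
      _ ≤ N * ∑ v : Fin n, ((G.degree v : ℝ)) ^ 2 := hcs
      _ ≤ N * (2 * a + ((t : ℝ) - 1) * N ^ 2) := by
          apply mul_le_mul_of_nonneg_left h2 hNnn
  have hsq : (2 * a - N) ^ 2 ≤ ((t : ℝ) - 1) * N ^ 3 + N ^ 2 := by nlinarith
  have h3 : 2 * a - N ≤ Real.sqrt (((t : ℝ) - 1) * N ^ 3 + N ^ 2) := by
    calc 2 * a - N ≤ |2 * a - N| := le_abs_self _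
      _ = Real.sqrt ((2 * a - N) ^ 2) := (Real.sqrt_sq_eq_abs _).symm
      _ ≤ Real.sqrt (((t : ℝ) - 1) * N ^ 3 + N ^ 2) := Real.sqrt_le_sqrt hsq
  have h4 : Real.sqrt (((t : ℝ) - 1) * N ^ 3 + N ^ 2)
      ≤ Real.sqrt (((t : ℝ) - 1) * N ^ 3) + Real.sqrt (N ^ 2) := by
    have hx : (0 : ℝ) ≤ ((t : ℝ) - 1) * N ^ 3 := by positivity
    have hy : (0 : ℝ) ≤ N ^ 2 := by positivity
    rw [show Real.sqrt (((t : ℝ) - 1) * N ^ 3) + Real.sqrt (N ^ 2)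
        = Real.sqrt ((Real.sqrt (((t : ℝ) - 1) * N ^ 3) + Real.sqrt (N ^ 2)) ^ 2) from
      (Real.sqrt_sq (by positivity)).symm]
    apply Real.sqrt_le_sqrt
    nlinarith [Real.sq_sqrt hx, Real.sq_sqrt hy, Real.sqrt_nonneg (((t : ℝ) - 1) * N ^ 3),
      Real.sqrt_nonneg (N ^ 2)]
  have h5 : Real.sqrt (((t : ℝ) - 1) * N ^ 3) = Real.sqrt ((t : ℝ) - 1) * N ^ ((3 : ℝ) / 2) := by
    rw [Real.sqrt_mul hTnn]
    congr 1
    rw [show (N ^ 3 : ℝ) = N ^ ((3 : ℕ) : ℝ) by rw [Real.rpow_natCast],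
      Real.sqrt_eq_rpow, ← Real.rpow_mul hNnn]
    norm_num
  have h6 : Real.sqrt (N ^ 2) = N := Real.sqrt_sq hNnn
  have : 2 * a ≤ Real.sqrt ((t : ℝ) - 1) * N ^ ((3 : ℝ) / 2) + 2 * N := by
    have := h3.trans (h4.trans_eq (by rw [h5, h6]))
    linarith
  linarith

lemma exK2t_le (t n : ℕ) (ht : 3 ≤ t) :
    (exK2t n t : ℝ) ≤ Real.sqrt ((t : ℝ) - 1) / 2 * (n : ℝ) ^ ((3 : ℝ) / 2) + n := by
  classical
  have hbot : K2tFree t (⊥ : SimpleGraph (Fin n)) := by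
    rintro ⟨x, y, u, -, -, -, hadj⟩
    exact (hadj ⟨0, by omega⟩).1
  have hne : {m | ∃ G : SimpleGraph (Fin n), K2tFree t G ∧ G.edgeSet.ncard = m}.Nonempty :=
    ⟨_, ⊥, hbot, rfl⟩
  have hbdd : BddAbove {m | ∃ G : SimpleGraph (Fin n), K2tFree t G ∧ G.edgeSet.ncard = m} :=
    ⟨Nat.card (Sym2 (Fin n)), fun m hm => ncard_mem_exK2tSet hm⟩
  obtain ⟨G, hGf, hGm⟩ := Nat.sSup_mem hne hbdd
  have hdec : DecidableRel G.Adj := Classical.decRel _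
  have hcard : exK2t n t = G.edgeFinset.card := by
    rw [exK2t, ← hGm, Set.ncard_eq_toFinset_card']; exact congrArg Finset.card (Finset.ext fun _ => by simp)
  rw [hcard]
  exact kst t n ht G hGf

open Filter Asymptotics in
lemma cast_littleO :
    (fun n : ℕ => (n : ℝ)) =o[atTop] fun n : ℕ => (n : ℝ) ^ ((3 : ℝ) / 2) := by
  have hreal : (fun x : ℝ => x) =o[atTop] fun x : ℝ => x ^ ((3 : ℝ) / 2) := by
    rw [isLittleO_iff_tendsto']
    · have h0 : Tendsto (fun x : ℝ => x ^ (-(1 / 2) : ℝ)) atTop (nhds 0) :=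
        tendsto_rpow_neg_atTop (by norm_num)
      apply h0.congr'
      filter_upwards [eventually_gt_atTop (0 : ℝ)] with x hx
      rw [show x / x ^ ((3 : ℝ) / 2) = x ^ (1 : ℝ) / x ^ ((3 : ℝ) / 2) by rw [Real.rpow_one],
        ← Real.rpow_sub hx]
      norm_num
    · filter_upwards [eventually_gt_atTop (0 : ℝ)] with x hx h
      exact absurd h (by positivity)
  exact hreal.comp_tendsto tendsto_natCast_atTop_atTop


open Asymptotics Filter in
/-- if `H` is 3-uniform with no `K_{2,t}` trace (`t ≥ 3`) and `A` is the
set of edges of `H` containing a pair of co-degree exactly 1, then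
`|A| ≤ ex(n, K_{2,t})`, which in turn is at most `(√(t−1)/2)n^{3/2} + o(n^{3/2})`. -/
theorem stmt_18 (t : ℕ) (ht : 3 ≤ t) :
    (∀ n : ℕ, ∀ H : Finset (Finset (Fin n)), (∀ e ∈ H, e.card = 3) →
      ¬ HasK2tTrace t H →
      (H.filter fun e => ∃ x ∈ e, ∃ y ∈ e, x ≠ y ∧ codeg H x y = 1).card ≤ exK2t n t) ∧
    ∃ g : ℕ → ℝ, g =o[atTop] (fun n : ℕ => (n : ℝ) ^ ((3 : ℝ) / 2)) ∧
      ∀ n : ℕ, (exK2t n t : ℝ) ≤ Real.sqrt ((t : ℝ) - 1) / 2 * (n : ℝ) ^ ((3 : ℝ) / 2) + g n := by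
  refine ⟨fun n H _ hntr => part1 t n ht H hntr, fun n => (n : ℝ), cast_littleO,
    fun n => exK2t_le t n ht⟩
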